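/- Measuring the projection onto the symmetric subspace of H^{⊗(n+1)} on input states of the form ψ ⊗ φ^{⊗n} is equivalent to the single-system effect operator E = |φ⟩⟨φ| + (1/(n+1))(1 − |φ⟩⟨φ|): for every unit ψ, ⟨ψ ⊗ φ^{⊗n}, Π_S(ψ ⊗ φ^{⊗n})⟩ = ⟨ψ, Eψ⟩. -/

import Mathlib

noncomputable section

/-- The `n`-fold tensor power `H^{⊗n}` of `H = ℂ^d`, realized concretely as
`EuclideanSpace ℂ (Fin n → Fin d)`. -/
abbrev TPow (d n : ℕ) := EuclideanSpace ℂ (Fin n → Fin d)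

/-- The permutation-symmetric subspace of `H^{⊗n}`: vectors invariant under all
permutations of the tensor factors. -/
def SymSub (d n : ℕ) : Submodule ℂ (TPow d n) where
  carrier := {v | ∀ σ : Equiv.Perm (Fin n), ∀ f : Fin n → Fin d, v (f ∘ σ) = v f}
  add_mem' := by
    intro a b ha hb σ f
    show a (f ∘ σ) + b (f ∘ σ) = a f + b f
    rw [ha σ f, hb σ f]
  zero_mem' := by intro σ f; rfl
  smul_mem' := by
    intro c v hv σ f
    show c * v (f ∘ σ) = c * v f
    rw [hv σ f]

/-- The state `ψ ⊗ φ^{⊗n}` in `H^{⊗(n+1)}`: `ψ` on factor `0`, `φ` on each of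
the remaining `n` factors. -/
def onePlusPow {d n : ℕ} (ψ φ : EuclideanSpace ℂ (Fin d)) : TPow d (n + 1) :=
  WithLp.toLp 2 (fun f => ψ (f 0) * ∏ i : Fin n, φ (f i.succ))

open scoped Matrix

/-- The single-system effect operator `E = |φ⟩⟨φ| + (1/(n+1))(1 − |φ⟩⟨φ|)`. -/
def effectE (d n : ℕ) (φ : EuclideanSpace ℂ (Fin d)) : Matrix (Fin d) (Fin d) ℂ :=
  Matrix.vecMulVec φ (star (φ : Fin d → ℂ))
    + ((n : ℂ) + 1)⁻¹ • (1 - Matrix.vecMulVec φ (star (φ : Fin d → ℂ)))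


def symz (d n : ℕ) (v : TPow d n) : TPow d n :=
  WithLp.toLp 2 (fun f => ((n.factorial : ℂ))⁻¹ * ∑ σ : Equiv.Perm (Fin n), v (f ∘ σ))

lemma symz_mem (d n : ℕ) (v : TPow d n) : symz d n v ∈ SymSub d n := by
  intro τ f
  show ((n.factorial : ℂ))⁻¹ * ∑ σ : Equiv.Perm (Fin n), v ((f ∘ τ) ∘ σ)
      = ((n.factorial : ℂ))⁻¹ * ∑ σ : Equiv.Perm (Fin n), v (f ∘ σ)
  congr 1
  refine Fintype.sum_equiv (Equiv.mulLeft τ) _ _ (fun σ => ?_)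
  rfl

lemma sum_comp_perm {d n : ℕ} (σ : Equiv.Perm (Fin n)) (F : (Fin n → Fin d) → ℂ) :
    ∑ f : Fin n → Fin d, F (f ∘ σ) = ∑ f : Fin n → Fin d, F f := by
  refine Fintype.sum_equiv (Equiv.arrowCongr σ.symm (Equiv.refl (Fin d))) _ _ (fun f => ?_)
  congr 1

lemma proj_eq_symz (d n : ℕ) (v : TPow d n) :
    (Submodule.orthogonalProjection (SymSub d n) v : TPow d n) = symz d n v := by
  apply Submodule.eq_starProjection_of_mem_of_inner_eq_zero (symz_mem d n v)
  intro w hw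
  rw [inner_sub_left]
  have key : ∀ σ : Equiv.Perm (Fin n),
      ∑ f : Fin n → Fin d, (starRingEnd ℂ) (v (f ∘ σ)) * w f
        = ∑ f : Fin n → Fin d, (starRingEnd ℂ) (v f) * w f := by
    intro σ
    rw [← sum_comp_perm σ⁻¹ (fun f => (starRingEnd ℂ) (v (f ∘ σ)) * w f)]
    refine Finset.sum_congr rfl (fun f _ => ?_)
    have h1 : (f ∘ ⇑σ⁻¹) ∘ ⇑σ = f := by ext x; simp
    rw [h1, hw σ⁻¹ f]
  have : (inner ℂ (symz d n v) w : ℂ) = inner ℂ v w := by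
    simp only [PiLp.inner_apply, RCLike.inner_apply', symz, map_mul, map_sum, Finset.mul_sum,
      Finset.sum_mul]
    rw [Finset.sum_comm]
    simp only [mul_assoc]
    have : ∀ σ : Equiv.Perm (Fin n),
        ∑ f : Fin n → Fin d, (starRingEnd ℂ) ((n.factorial : ℂ))⁻¹ *
          ((starRingEnd ℂ) (v (f ∘ σ)) * w f)
        = ((n.factorial : ℂ))⁻¹ * ∑ f : Fin n → Fin d, (starRingEnd ℂ) (v f) * w f := by
      intro σ
      rw [← Finset.mul_sum, key σ]
      norm_num
    rw [Finset.sum_congr rfl (fun σ _ => this σ), Finset.sum_const, Finset.card_univ,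
      Fintype.card_perm, Fintype.card_fin, nsmul_eq_mul, ← mul_assoc]
    have hne : (n.factorial : ℂ) ≠ 0 := Nat.cast_ne_zero.2 (Nat.factorial_ne_zero n)
    field_simp
  rw [this, sub_self]

lemma rhs_eval (d n : ℕ) (φ ψ : EuclideanSpace ℂ (Fin d)) (hψ : ‖ψ‖ = 1) :
    (inner ℂ ψ (Matrix.toEuclideanLin (effectE d n φ) ψ) : ℂ)
      = (inner ℂ φ ψ : ℂ) * (starRingEnd ℂ) (inner ℂ φ ψ)
        + ((n : ℂ) + 1)⁻¹ * (1 - (inner ℂ φ ψ : ℂ) * (starRingEnd ℂ) (inner ℂ φ ψ)) := by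
  have hc : ∑ y : Fin d, star (φ y) * (WithLp.equiv 2 (Fin d → ℂ)) ψ y = (inner ℂ φ ψ : ℂ) := by
    simp [PiLp.inner_apply, RCLike.inner_apply', mul_comm]
  have hvm : ∀ x, (Matrix.vecMulVec φ (star (φ : Fin d → ℂ)) *ᵥ (WithLp.equiv 2 (Fin d → ℂ)) ψ) x
      = (inner ℂ φ ψ : ℂ) * φ x := by
    intro x
    simp only [Matrix.mulVec, dotProduct, Matrix.vecMulVec_apply, Pi.star_apply,
      mul_assoc, ← Finset.mul_sum, hc]
    ring
  have hEψ : Matrix.toEuclideanLin (effectE d n φ) ψ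
      = (inner ℂ φ ψ : ℂ) • φ + ((n : ℂ) + 1)⁻¹ • (ψ - (inner ℂ φ ψ : ℂ) • φ) := by
    rw [Matrix.toEuclideanLin_apply]
    ext x
    simp only [effectE, Matrix.add_mulVec, Matrix.smul_mulVec, Matrix.sub_mulVec,
      Matrix.one_mulVec]
    simp only [PiLp.toLp_apply, Pi.add_apply, Pi.smul_apply, Pi.sub_apply,
      smul_eq_mul, PiLp.add_apply, PiLp.smul_apply, PiLp.sub_apply]
    erw [hvm]
  rw [hEψ]
  have hψψ : (inner ℂ ψ ψ : ℂ) = 1 := by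
    rw [inner_self_eq_norm_sq_to_K, hψ]; norm_num
  have hcj : (inner ℂ ψ φ : ℂ) = (starRingEnd ℂ) (inner ℂ φ ψ) := (inner_conj_symm ψ φ).symm
  rw [inner_add_right, inner_smul_right, inner_smul_right, inner_sub_right, inner_smul_right,
    hψψ, hcj]
  try ring

lemma onePlusPow_eq_prod {d n : ℕ} (ψ φ : EuclideanSpace ℂ (Fin d)) (f : Fin (n+1) → Fin d) :
    onePlusPow ψ φ f = ∏ j : Fin (n+1), (Fin.cons ψ (fun _ => φ) : Fin (n+1) → (Fin d → ℂ)) j (f j) := by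
  rw [Fin.prod_univ_succ]
  simp [onePlusPow]

lemma lhs_eval (d n : ℕ) (φ ψ : EuclideanSpace ℂ (Fin d)) (hφ : ‖φ‖ = 1) (hψ : ‖ψ‖ = 1) :
    (inner ℂ (onePlusPow ψ φ) (symz d (n+1) (onePlusPow (n := n) ψ φ)) : ℂ)
      = (((n+1).factorial : ℂ))⁻¹ * ((n.factorial : ℂ) *
          (1 + (n : ℂ) * ((starRingEnd ℂ) (inner ℂ φ ψ) * (inner ℂ φ ψ : ℂ)))) := by
  set u : Fin (n+1) → (Fin d → ℂ) := Fin.cons ψ (fun _ => φ) with hu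
  set c : ℂ := inner ℂ φ ψ with hc
  set Ψ := onePlusPow (n := n) ψ φ with hΨ
  have hcs : ∑ x : Fin d, (starRingEnd ℂ) (φ x) * ψ x = c := by
    rw [hc]; simp [PiLp.inner_apply, RCLike.inner_apply', mul_comm]
  have hφφ : ∑ x : Fin d, (starRingEnd ℂ) (φ x) * φ x = 1 := by
    have : (inner ℂ φ φ : ℂ) = 1 := by rw [inner_self_eq_norm_sq_to_K, hφ]; norm_num
    rw [← this, PiLp.inner_apply]; simp only [RCLike.inner_apply']
  have hψψ : ∑ x : Fin d, (starRingEnd ℂ) (ψ x) * ψ x = 1 := by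
    have : (inner ℂ ψ ψ : ℂ) = 1 := by rw [inner_self_eq_norm_sq_to_K, hψ]; norm_num
    rw [← this, PiLp.inner_apply]; simp only [RCLike.inner_apply']
  have hcsj : ∑ x : Fin d, (starRingEnd ℂ) (ψ x) * φ x = (starRingEnd ℂ) c := by
    rw [hc, ← inner_conj_symm]; simp [PiLp.inner_apply, RCLike.inner_apply', mul_comm]
  -- key per-permutation evaluation
  have key : ∀ σ : Equiv.Perm (Fin (n+1)),
      ∑ f : Fin (n+1) → Fin d, (starRingEnd ℂ) (Ψ f) * Ψ (f ∘ σ)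
        = if σ 0 = 0 then 1 else (starRingEnd ℂ) c * c := by
    intro σ
    have hstep : ∀ f : Fin (n+1) → Fin d,
        (starRingEnd ℂ) (Ψ f) * Ψ (f ∘ σ)
          = ∏ j : Fin (n+1), ((starRingEnd ℂ) (u j (f j)) * u (σ⁻¹ j) (f j)) := by
      intro f
      have h1 : Ψ (f ∘ σ) = ∏ j : Fin (n+1), u (σ⁻¹ j) (f j) := by
        rw [hΨ, onePlusPow_eq_prod]
        rw [← Equiv.prod_comp σ (fun j => u (σ⁻¹ j) (f j))]
        simp [Function.comp]
        rfl
      rw [h1, hΨ, onePlusPow_eq_prod, map_prod, ← Finset.prod_mul_distrib]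
    rw [Finset.sum_congr rfl (fun f _ => hstep f)]
    rw [← Fintype.prod_sum (κ := fun _ : Fin (n+1) => Fin d)
      (fun j x => (starRingEnd ℂ) (u j x) * u (σ⁻¹ j) x)]
    -- now compute the product of single-site overlaps
    have hu0 : u 0 = (ψ : Fin d → ℂ) := by simp [hu]
    have huj : ∀ j : Fin (n+1), j ≠ 0 → u j = (φ : Fin d → ℂ) := by
      intro j hj
      obtain ⟨i, rfl⟩ := Fin.exists_succ_eq.mpr hj
      simp [hu]
    have hG : ∀ j : Fin (n+1),
        (∑ x : Fin d, (starRingEnd ℂ) (u j x) * u (σ⁻¹ j) x)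
          = (if j = 0 then (if σ 0 = 0 then 1 else (starRingEnd ℂ) c)
             else (if σ⁻¹ j = 0 then c else 1)) := by
      intro j
      by_cases hj : j = 0
      · subst hj
        by_cases h0 : σ 0 = 0
        · have hi : σ⁻¹ 0 = (0 : Fin (n+1)) := by
            have h2 := congrArg (⇑σ⁻¹) h0
            simpa using h2.symm
          rw [hu0, hi, hu0]
          simp only [if_pos rfl, if_pos h0]
          exact hψψ
        · have hne : σ⁻¹ 0 ≠ 0 := by
            intro h
            apply h0
            have h2 := congrArg (⇑σ) h
            simpa using h2.symm
          rw [hu0, huj _ hne]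
          simp only [if_pos rfl, if_neg h0]
          exact hcsj
      · by_cases hs : σ⁻¹ j = 0
        · rw [huj j hj, hs, hu0]
          simp only [if_neg hj, if_pos hs]
          exact hcs
        · rw [huj j hj, huj _ hs]
          simp only [if_neg hj, if_neg hs]
          exact hφφ
    rw [Finset.prod_congr rfl (fun j _ => hG j)]
    by_cases h0 : σ 0 = 0
    · have : ∀ j : Fin (n+1), (if j = 0 then (if σ 0 = 0 then (1:ℂ) else (starRingEnd ℂ) c)
             else (if σ⁻¹ j = 0 then c else 1)) = 1 := by
        intro j
        by_cases hj : j = 0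
        · simp [hj, h0]
        · have : σ⁻¹ j ≠ 0 := by
            intro h
            apply hj
            have := congrArg σ h
            simpa [h0] using this
          rw [if_neg hj, if_neg this]
      rw [Finset.prod_congr rfl (fun j _ => this j)]
      simp [h0]
    · -- split off j = 0 and j = σ 0
      have hσ0 : σ 0 ∈ (Finset.univ.erase (0 : Fin (n+1))) := by
        simp [h0]
      set G : Fin (n+1) → ℂ := fun j => (if j = 0 then (if σ 0 = 0 then (1:ℂ) else (starRingEnd ℂ) c)
             else (if σ⁻¹ j = 0 then c else 1)) with hGdef
      rw [← Finset.mul_prod_erase Finset.univ G (Finset.mem_univ 0)]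
      rw [← Finset.mul_prod_erase _ G hσ0]
      have hrest : ∀ j ∈ ((Finset.univ.erase (0 : Fin (n+1))).erase (σ 0)), G j = 1 := by
        intro j hjmem
        rw [Finset.mem_erase] at hjmem
        obtain ⟨hj1, hj2⟩ := hjmem
        rw [Finset.mem_erase] at hj2
        have hji : σ⁻¹ j ≠ 0 := by
          intro h
          apply hj1
          have h2 := congrArg (⇑σ) h
          simpa using h2
        rw [hGdef]; simp only [if_neg hj2.1, if_neg hji]
      rw [Finset.prod_congr rfl hrest, Finset.prod_const_one]
      have hG0 : G 0 = (starRingEnd ℂ) c := by simp [hGdef, h0]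
      have hGσ : G (σ 0) = c := by
        have h1 : σ 0 ≠ 0 := h0
        have h2 : σ⁻¹ (σ 0) = 0 := by simp
        simp [hGdef, h1, h2]
      rw [hG0, hGσ]
      simp [h0]
  -- now the outer sum
  have houter : (inner ℂ Ψ (symz d (n+1) Ψ) : ℂ)
      = (((n+1).factorial : ℂ))⁻¹ *
          ∑ σ : Equiv.Perm (Fin (n+1)), ∑ f : Fin (n+1) → Fin d, (starRingEnd ℂ) (Ψ f) * Ψ (f ∘ σ) := by
    simp only [PiLp.inner_apply, RCLike.inner_apply', symz]
    simp only [Finset.mul_sum]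
    rw [Finset.sum_comm]
    exact Finset.sum_congr rfl fun σ _ => Finset.sum_congr rfl fun f _ => by ring
  rw [houter, Finset.sum_congr rfl (fun σ _ => key σ)]
  congr 1
  rw [← Equiv.sum_comp Equiv.Perm.decomposeFin.symm
    (fun σ : Equiv.Perm (Fin (n+1)) => if σ 0 = 0 then (1:ℂ) else (starRingEnd ℂ) c * c)]
  rw [Fintype.sum_prod_type]
  simp only [Equiv.Perm.decomposeFin_symm_apply_zero, Finset.sum_const, Finset.card_univ,
    Fintype.card_perm, nsmul_eq_mul]
  rw [Fin.sum_univ_succ]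
  simp only [if_pos rfl, Fin.succ_ne_zero, if_neg (fun h => Fin.succ_ne_zero _ h),
    Finset.sum_const, Finset.card_univ, Fintype.card_fin, nsmul_eq_mul]
  norm_num
  ring

/-- Measuring the projection onto the symmetric subspace of
`H^{⊗(n+1)}` on `ψ ⊗ φ^{⊗n}` is equivalent to measuring the effect
`E = |φ⟩⟨φ| + (1/(n+1))(1 − |φ⟩⟨φ|)` on `ψ`:
`⟨ψ ⊗ φ^{⊗n}, Π_S (ψ ⊗ φ^{⊗n})⟩ = ⟨ψ, Eψ⟩` for every unit vector `ψ`. -/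
theorem stmt_14 (d n : ℕ) (φ : EuclideanSpace ℂ (Fin d)) (hφ : ‖φ‖ = 1) :
    ∀ ψ : EuclideanSpace ℂ (Fin d), ‖ψ‖ = 1 →
      inner ℂ (onePlusPow ψ φ)
          ((Submodule.orthogonalProjection (SymSub d (n + 1)) (onePlusPow ψ φ) : TPow d (n + 1)))
        = (inner ℂ ψ (Matrix.toEuclideanLin (effectE d n φ) ψ) : ℂ) := by
  intro ψ hψ
  rw [proj_eq_symz, lhs_eval d n φ ψ hφ hψ, rhs_eval d n φ ψ hψ]
  have h1 : ((n+1).factorial : ℂ) = ((n:ℂ)+1) * (n.factorial : ℂ) := by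
    rw [Nat.factorial_succ]; push_cast; ring
  have h2 : ((n:ℂ)+1) ≠ 0 := Nat.cast_add_one_ne_zero n
  have h3 : ((n.factorial : ℕ) : ℂ) ≠ 0 := Nat.cast_ne_zero.2 n.factorial_ne_zero
  rw [h1]
  field_simp
  ring
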